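/- Let I be a monomial ideal of S = K[x_1,...,x_n] none of whose minimal generators is divisible by x_1, and let S' = K[x_2,...,x_n], I' = I ∩ S'. Then sdepth_S(S/I) = sdepth_{S'}(S'/I') + 1. -/

import Mathlib

open MvPolynomial

namespace Paper

variable (K : Type) [Field K]

/-- The monomial `x^a` in `K[x_0, …, x_{n-1}]`. -/
noncomputable def mono (n : ℕ) (a : Fin n → ℕ) : MvPolynomial (Fin n) K :=
  MvPolynomial.monomial (Finsupp.equivFunOnFinite.symm a) 1

/-- A monomial ideal: an ideal generated by the monomials it contains. -/
def IsMonomialIdeal (n : ℕ) (I : Ideal (MvPolynomial (Fin n) K)) : Prop :=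
  I = Ideal.span ((mono K n) '' {a | mono K n a ∈ I})

/-- The set of exponent vectors of the minimal monomial generators `G(I)`. -/
def minGen (n : ℕ) (I : Ideal (MvPolynomial (Fin n) K)) : Set (Fin n → ℕ) :=
  {a | mono K n a ∈ I ∧ ∀ i : Fin n, 0 < a i → mono K n (a - Pi.single i 1) ∉ I}

/-- The monomial ideal generated by a set of exponent vectors. -/
noncomputable def monomialIdealOf (n : ℕ) (A : Set (Fin n → ℕ)) :
    Ideal (MvPolynomial (Fin n) K) :=
  Ideal.span ((mono K n) '' A)

/-- Weakly polymatroidal monomial ideal. -/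
def WeaklyPolymatroidal (n : ℕ) (I : Ideal (MvPolynomial (Fin n) K)) : Prop :=
  IsMonomialIdeal K n I ∧
    ∀ a b : Fin n → ℕ, a ∈ minGen K n I → b ∈ minGen K n I →
      ∀ t : Fin n, (∀ s : Fin n, s < t → a s = b s) → b t < a t →
        ∃ j : Fin n, t < j ∧ 0 < b j ∧
          mono K n (b + Pi.single t 1 - Pi.single j 1) ∈ I

/-- Polymatroidal monomial ideal. -/
def Polymatroidal (n : ℕ) (I : Ideal (MvPolynomial (Fin n) K)) : Prop :=
  IsMonomialIdeal K n I ∧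
    (∃ d : ℕ, ∀ a ∈ minGen K n I, ∑ i, a i = d) ∧
    ∀ a b : Fin n → ℕ, a ∈ minGen K n I → b ∈ minGen K n I →
      ∀ i : Fin n, b i < a i →
        ∃ j : Fin n, a j < b j ∧
          (a + Pi.single j 1 - Pi.single i 1) ∈ minGen K n I

/-- `I` has linear quotients with respect to the order `u 0 ≺ u 1 ≺ …` on its
minimal monomial generators: each colon ideal `(u 0, …, u (i-1)) : u i` is
generated by a subset of the variables. -/
def LinearQuotientsWith (n : ℕ) (I : Ideal (MvPolynomial (Fin n) K)) (t : ℕ)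
    (u : Fin t → (Fin n → ℕ)) : Prop :=
  Function.Injective u ∧ Set.range u = minGen K n I ∧
    ∀ i : Fin t, 0 < (i : ℕ) →
      ∃ V : Set (Fin n),
        Submodule.colon (monomialIdealOf K n (u '' {j | (j : ℕ) < (i : ℕ)}))
            (Ideal.span {mono K n (u i)}) =
          Ideal.span ((fun k => (X k : MvPolynomial (Fin n) K)) '' V)

/-- `pd_R M ≤ d`, defined recursively via kernels of surjections from projectives. -/
def HasProjDimLE (R : Type) [CommRing R] :
    ℕ → ∀ (M : Type) [AddCommGroup M] [Module R M], Prop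
  | 0, M, _, _ => Module.Projective R M
  | (d + 1), M, _, _ =>
      ∃ (P : Type) (_ : AddCommGroup P) (_ : Module R P) (f : P →ₗ[R] M),
        Module.Projective R P ∧ Function.Surjective f ∧
          HasProjDimLE R d (LinearMap.ker f)

/-- The projective dimension of `M` over `R`, as an element of `ℕ∞`. -/
noncomputable def projDim (R : Type) [CommRing R] (M : Type) [AddCommGroup M]
    [Module R M] : ℕ∞ :=
  sInf ((↑) '' {d : ℕ | HasProjDimLE R d M})

/-- The depth of `M` with respect to the ideal `J`: the supremum of the lengths of
`M`-regular sequences consisting of elements of `J`. -/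
noncomputable def depth (R : Type) [CommRing R] (J : Ideal R) (M : Type)
    [AddCommGroup M] [Module R M] : ℕ∞ :=
  sSup ((↑) '' {k : ℕ | ∃ rs : List R, rs.length = k ∧ (∀ r ∈ rs, r ∈ J) ∧
    RingTheory.Sequence.IsRegular M rs})

/-- The graded maximal ideal `(x_0, …, x_{n-1})` of `K[x_0, …, x_{n-1}]`. -/
noncomputable def maxIdeal (n : ℕ) : Ideal (MvPolynomial (Fin n) K) :=
  Ideal.span (Set.range X)

/-- The Stanley space `x^a · K[Z]`, as a `K`-subspace of `K[x_0, …, x_{n-1}]`. -/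
noncomputable def stanleySpace (n : ℕ) (a : Fin n → ℕ) (Z : Finset (Fin n)) :
    Submodule K (MvPolynomial (Fin n) K) :=
  Submodule.span K ((fun e => mono K n (a + e)) '' {e | ∀ j, j ∉ Z → e j = 0})

/-- A Stanley decomposition of `S/I`: a `K`-vector space decomposition
`S = I ⊕ (⊕ᵢ x^{a i} K[Z i])`. -/
def IsStanleyDecOfQuot (n : ℕ) (I : Ideal (MvPolynomial (Fin n) K)) (t : ℕ)
    (a : Fin t → (Fin n → ℕ)) (Z : Fin t → Finset (Fin n)) : Prop :=
  iSupIndep (fun o : Option (Fin t) =>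
      o.elim (Submodule.restrictScalars K I) (fun i => stanleySpace K n (a i) (Z i))) ∧
    (⨆ o : Option (Fin t),
      o.elim (Submodule.restrictScalars K I) (fun i => stanleySpace K n (a i) (Z i))) = ⊤

/-- The Stanley depth of `S/I`. -/
noncomputable def sdepthQuot (n : ℕ) (I : Ideal (MvPolynomial (Fin n) K)) : ℕ∞ :=
  sSup ((↑) '' {d : ℕ | ∃ (t : ℕ) (a : Fin t → (Fin n → ℕ)) (Z : Fin t → Finset (Fin n)),
    IsStanleyDecOfQuot K n I t a Z ∧ ∀ i, d ≤ (Z i).card})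

/-- A Stanley decomposition of the ideal `I` itself: `I = ⊕ᵢ x^{a i} K[Z i]`
as `K`-vector spaces. -/
def IsStanleyDecOfIdeal (n : ℕ) (I : Ideal (MvPolynomial (Fin n) K)) (t : ℕ)
    (a : Fin t → (Fin n → ℕ)) (Z : Fin t → Finset (Fin n)) : Prop :=
  iSupIndep (fun i : Fin t => stanleySpace K n (a i) (Z i)) ∧
    (⨆ i : Fin t, stanleySpace K n (a i) (Z i)) = Submodule.restrictScalars K I

/-- The Stanley depth of the ideal `I`. -/
noncomputable def sdepthIdeal (n : ℕ) (I : Ideal (MvPolynomial (Fin n) K)) : ℕ∞ :=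
  sSup ((↑) '' {d : ℕ | ∃ (t : ℕ) (a : Fin t → (Fin n → ℕ)) (Z : Fin t → Finset (Fin n)),
    IsStanleyDecOfIdeal K n I t a Z ∧ ∀ i, d ≤ (Z i).card})

end Paper

open Paper

namespace SAux
variable (K : Type) [Field K]

-- [supp section assumed: will paste t2 content; for now re-import by pasting]
variable (K : Type) [Field K]

/-- Submodule of polynomials whose monomials (as exponent functions) lie in `s`. -/
noncomputable def supp (n : ℕ) (s : Set (Fin n → ℕ)) : Submodule K (MvPolynomial (Fin n) K) where
  carrier := {f | ∀ d ∈ f.support, ⇑d ∈ s}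
  add_mem' := by
    classical
    intro f g hf hg d hd
    rcases Finset.mem_union.mp (MvPolynomial.support_add hd) with h | h
    · exact hf d h
    · exact hg d h
  zero_mem' := by simp
  smul_mem' := by
    intro c f hf d hd
    exact hf d (MvPolynomial.support_smul hd)

variable {K}

lemma mem_supp {n : ℕ} {s : Set (Fin n → ℕ)} {f : MvPolynomial (Fin n) K} :
    f ∈ supp K n s ↔ ∀ d ∈ f.support, ⇑d ∈ s := Iff.rfl

lemma monomial_mem_supp {n : ℕ} {s : Set (Fin n → ℕ)} {d : Fin n →₀ ℕ} {c : K} (hc : c ≠ 0) :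
    monomial d c ∈ supp K n s ↔ ⇑d ∈ s := by
  simp [mem_supp, MvPolynomial.support_monomial, hc]

lemma supp_mono {n : ℕ} {s t : Set (Fin n → ℕ)} (h : s ⊆ t) : supp K n s ≤ supp K n t :=
  fun _ hf d hd => h (hf d hd)

lemma disjoint_supp {n : ℕ} {s t : Set (Fin n → ℕ)}
    (h : ∀ g, g ∈ s → g ∈ t → False) : Disjoint (supp K n s) (supp K n t) := by
  rw [Submodule.disjoint_def]
  intro f hf hg
  ext d
  by_contra hd
  have hd' : d ∈ f.support := by simpa [MvPolynomial.mem_support_iff] using hd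
  exact h _ (hf d hd') (hg d hd')

lemma le_supp_union {n : ℕ} {ι : Sort*} (s : ι → Set (Fin n → ℕ)) :
    (⨆ i, supp K n (s i)) ≤ supp K n (⋃ i, s i) :=
  iSup_le fun i => supp_mono (Set.subset_iUnion s i)

lemma supp_le_iSup {n : ℕ} {ι : Type*} (s : ι → Set (Fin n → ℕ)) {f : MvPolynomial (Fin n) K}
    (hf : ∀ d ∈ f.support, ∃ i, ⇑d ∈ s i) : f ∈ ⨆ i, supp K n (s i) := by
  classical
  rw [MvPolynomial.as_sum f]
  refine Submodule.sum_mem _ fun d hd => ?_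
  obtain ⟨i, hi⟩ := hf d hd
  exact Submodule.mem_iSup_of_mem i (fun d' hd' => by
    rcases (Finset.mem_singleton.mp (by
      simpa [MvPolynomial.support_monomial, MvPolynomial.mem_support_iff.mp hd] using hd')) with rfl
    exact hi)


/-- Exponent set of the Stanley space `x^a K[Z]`. -/
def E {n : ℕ} (a : Fin n → ℕ) (Z : Finset (Fin n)) : Set (Fin n → ℕ) :=
  {g | ∃ e : Fin n → ℕ, (∀ j ∉ Z, e j = 0) ∧ g = a + e}

lemma mono_eq (n : ℕ) (a : Fin n → ℕ) :
    mono K n a = monomial (Finsupp.equivFunOnFinite.symm a) 1 := rfl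

lemma coe_symm {n : ℕ} (a : Fin n → ℕ) :
    ⇑(Finsupp.equivFunOnFinite.symm a : Fin n →₀ ℕ) = a := rfl

lemma stanleySpace_eq_supp {n : ℕ} (a : Fin n → ℕ) (Z : Finset (Fin n)) :
    stanleySpace K n a Z = supp K n (E a Z) := by
  apply le_antisymm
  · rw [stanleySpace, Submodule.span_le]
    rintro _ ⟨e, he, rfl⟩
    show mono K n (a + e) ∈ supp K n (E a Z)
    rw [mono_eq, monomial_mem_supp (one_ne_zero)]
    exact ⟨e, he, rfl⟩
  · intro f hf
    rw [stanleySpace]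
    rw [MvPolynomial.as_sum f]
    refine Submodule.sum_mem _ fun d hd => ?_
    obtain ⟨e, he, hde⟩ := hf d hd
    have hd' : d = Finsupp.equivFunOnFinite.symm (a + e) := by
      apply Finsupp.equivFunOnFinite.injective
      rw [Equiv.apply_symm_apply]; exact hde
    have : monomial d (coeff d f) = (coeff d f) • mono K n (a + e) := by
      rw [mono_eq, ← hd', MvPolynomial.smul_monomial, smul_eq_mul, mul_one]
    rw [this]
    exact Submodule.smul_mem _ _ (Submodule.subset_span ⟨e, he, rfl⟩)

/-- Monomial-membership characterisation for a monomial ideal. -/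
lemma mem_monomialIdeal_iff {n : ℕ} {I : Ideal (MvPolynomial (Fin n) K)}
    (hI : IsMonomialIdeal K n I) {f : MvPolynomial (Fin n) K} :
    f ∈ I ↔ ∀ d ∈ f.support, ∃ b : Fin n → ℕ, mono K n b ∈ I ∧ ∀ j, b j ≤ d j := by
  conv_lhs => rw [hI]
  have himg : (mono K n : (Fin n → ℕ) → MvPolynomial (Fin n) K) '' {a | mono K n a ∈ I}
      = (fun s => monomial s (1 : K)) '' (Finsupp.equivFunOnFinite.symm '' {a | mono K n a ∈ I}) := by
    rw [Set.image_image]; rfl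
  rw [himg, MvPolynomial.mem_ideal_span_monomial_image]
  constructor
  · intro h d hd
    obtain ⟨si, ⟨b, hb, rfl⟩, hle⟩ := h d hd
    exact ⟨b, hb, fun j => by simpa using Finsupp.le_def.mp hle j⟩
  · intro h d hd
    obtain ⟨b, hb, hle⟩ := h d hd
    exact ⟨_, ⟨b, hb, rfl⟩, Finsupp.le_def.mpr fun j => by simpa using hle j⟩

lemma mono_mem_iff {n : ℕ} {I : Ideal (MvPolynomial (Fin n) K)}
    (hI : IsMonomialIdeal K n I) {g : Fin n → ℕ} :
    mono K n g ∈ I ↔ ∃ b : Fin n → ℕ, mono K n b ∈ I ∧ ∀ j, b j ≤ g j := by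
  classical
  rw [mem_monomialIdeal_iff hI, mono_eq, MvPolynomial.support_monomial]
  simp [coe_symm]

lemma restrictScalars_eq_supp {n : ℕ} {I : Ideal (MvPolynomial (Fin n) K)}
    (hI : IsMonomialIdeal K n I) :
    Submodule.restrictScalars K I = supp K n {g | mono K n g ∈ I} := by
  ext f
  rw [Submodule.restrictScalars_mem, mem_supp, mem_monomialIdeal_iff hI]
  refine forall₂_congr fun d _ => ?_
  rw [Set.mem_setOf_eq, mono_mem_iff hI]

/-- Purely combinatorial partition condition corresponding to a Stanley decomposition of S/I. -/
def PartDec {n : ℕ} (S : Set (Fin n → ℕ)) (t : ℕ) (a : Fin t → (Fin n → ℕ))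
    (Z : Fin t → Finset (Fin n)) : Prop :=
  (∀ g : Fin n → ℕ, g ∈ S ∨ ∃ i, g ∈ E (a i) (Z i)) ∧
  (∀ i g, g ∈ S → g ∈ E (a i) (Z i) → False) ∧
  (∀ i j, i ≠ j → ∀ g, g ∈ E (a i) (Z i) → g ∈ E (a j) (Z j) → False)

lemma partDec_pairwise {n : ℕ} {S : Set (Fin n → ℕ)} {t a Z} (h : PartDec S t a Z) :
    ∀ o o' : Option (Fin t), o ≠ o' →
      ∀ g, g ∈ o.elim S (fun i => E (a i) (Z i)) → g ∈ o'.elim S (fun i => E (a i) (Z i)) → False := by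
  rintro (_|i) (_|j) hne g hg hg'
  · exact hne rfl
  · exact h.2.1 j g hg hg'
  · exact h.2.1 i g hg' hg
  · exact h.2.2 i j (by rintro rfl; exact hne rfl) g hg hg'

lemma isStanleyDecOfQuot_iff {n : ℕ} {I : Ideal (MvPolynomial (Fin n) K)}
    {S : Set (Fin n → ℕ)} (hIS : Submodule.restrictScalars K I = supp K n S)
    {t : ℕ} {a : Fin t → (Fin n → ℕ)} {Z : Fin t → Finset (Fin n)} :
    IsStanleyDecOfQuot K n I t a Z ↔ PartDec S t a Z := by
  have hF : (fun o : Option (Fin t) => o.elim (Submodule.restrictScalars K I)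
      (fun i => stanleySpace K n (a i) (Z i)))
      = fun o => supp K n (o.elim S (fun i => E (a i) (Z i))) := by
    funext o
    cases o
    · exact hIS
    · exact stanleySpace_eq_supp _ _
  rw [IsStanleyDecOfQuot, hF]
  set F : Option (Fin t) → Set (Fin n → ℕ) := fun o => o.elim S (fun i => E (a i) (Z i)) with hFdef
  constructor
  · rintro ⟨hind, htop⟩
    have hdis : ∀ o o' : Option (Fin t), o ≠ o' → ∀ g, g ∈ F o → g ∈ F o' → False := by
      intro o o' hne g hg hg'
      have hd : Disjoint (supp K n (F o)) (supp K n (F o')) := hind.pairwiseDisjoint hne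
      have h0 : monomial (Finsupp.equivFunOnFinite.symm g) (1 : K) = 0 := by
        rw [Submodule.disjoint_def] at hd
        exact hd _ ((monomial_mem_supp one_ne_zero).mpr (by rw [coe_symm]; exact hg))
          ((monomial_mem_supp one_ne_zero).mpr (by rw [coe_symm]; exact hg'))
      exact one_ne_zero (MvPolynomial.monomial_eq_zero.mp h0)
    refine ⟨?_, fun i g hg hg' => hdis none (some i) (by simp) g hg hg',
      fun i j hij g hg hg' => hdis (some i) (some j) (by simpa using hij) g hg hg'⟩
    intro g
    have : monomial (Finsupp.equivFunOnFinite.symm g) (1 : K) ∈ supp K n (⋃ o, F o) :=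
      le_supp_union F (htop ▸ Submodule.mem_top)
    have hg : g ∈ ⋃ o, F o := by
      have := (monomial_mem_supp (one_ne_zero)).mp this
      rwa [coe_symm] at this
    rcases Set.mem_iUnion.mp hg with ⟨(_|i), h⟩
    · exact Or.inl h
    · exact Or.inr ⟨i, h⟩
  · intro h
    have hdis := partDec_pairwise h
    constructor
    · intro o
      refine Disjoint.mono_right ?_ (disjoint_supp (s := F o)
        (t := ⋃ o' ∈ {x : Option (Fin t) | x ≠ o}, F o') ?_)
      · exact iSup₂_le fun o' ho' => supp_mono (Set.subset_biUnion_of_mem (u := F) (show o' ∈ {x : Option (Fin t) | x ≠ o} from ho'))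
      · rintro g hg hg'
        rcases Set.mem_iUnion₂.mp hg' with ⟨o', ho', hgo'⟩
        exact hdis o' o ho' g hgo' hg
    · rw [eq_top_iff]
      intro f _
      refine supp_le_iSup F fun d _ => ?_
      rcases h.1 ⇑d with hg | ⟨i, hg⟩
      · exact ⟨none, hg⟩
      · exact ⟨some i, hg⟩

lemma exists_minGen_le {n : ℕ} {I : Ideal (MvPolynomial (Fin n) K)} :
    ∀ (N : ℕ) (g : Fin n → ℕ), (∑ j, g j) ≤ N → mono K n g ∈ I →
      ∃ b ∈ minGen K n I, ∀ j, b j ≤ g j := by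
  intro N
  induction N with
  | zero =>
    intro g hg hmem
    refine ⟨g, ⟨hmem, fun i hi => ?_⟩, fun j => le_refl _⟩
    have hle : g i ≤ ∑ j, g j := Finset.single_le_sum (fun j _ => Nat.zero_le _) (Finset.mem_univ i)
    exact absurd hi (by omega)
  | succ N ih =>
    intro g hg hmem
    by_cases hmin : g ∈ minGen K n I
    · exact ⟨g, hmin, fun j => le_refl _⟩
    · have : ∃ i, 0 < g i ∧ mono K n (g - Pi.single i 1) ∈ I := by
        by_contra hcon
        push_neg at hcon
        exact hmin ⟨hmem, fun i hi => hcon i hi⟩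
      obtain ⟨i, hi, hmem'⟩ := this
      have hlt : (∑ j, (g - Pi.single i 1 : Fin n → ℕ) j) < ∑ j, g j := by
        refine Finset.sum_lt_sum (fun j _ => Nat.sub_le _ _) ⟨i, Finset.mem_univ i, ?_⟩
        simp only [Pi.sub_apply, Pi.single_eq_same]
        omega
      obtain ⟨b, hb, hble⟩ := ih (g - Pi.single i 1) (by omega) hmem'
      exact ⟨b, hb, fun j => le_trans (hble j) (Nat.sub_le _ _)⟩

lemma strip_mem_iff {m : ℕ} {I : Ideal (MvPolynomial (Fin (m + 1)) K)}
    (hI : IsMonomialIdeal K (m + 1) I) (hx : ∀ a ∈ minGen K (m + 1) I, a 0 = 0)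
    (g : Fin (m + 1) → ℕ) :
    mono K (m + 1) g ∈ I ↔ mono K (m + 1) (Fin.cons 0 (g ∘ Fin.succ)) ∈ I := by
  constructor
  · intro h
    obtain ⟨b, hb, hble⟩ := exists_minGen_le (I := I) (∑ j, g j) g (le_refl _) h
    refine (mono_mem_iff hI).mpr ⟨b, hb.1, fun j => ?_⟩
    refine Fin.cases ?_ (fun k => ?_) j
    · simp [hx b hb]
    · simpa using hble k.succ
  · intro h
    refine (mono_mem_iff hI).mpr ?_
    obtain ⟨b, hbI, hble⟩ := (mono_mem_iff hI).mp h
    refine ⟨b, hbI, fun j => ?_⟩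
    refine Fin.cases ?_ (fun k => ?_) j
    · have h0 : b 0 ≤ 0 := by simpa using hble 0
      omega
    · simpa using hble k.succ

lemma mapDomain_succ_eq {m : ℕ} (d : Fin m →₀ ℕ) :
    Finsupp.mapDomain Fin.succ d
      = Finsupp.equivFunOnFinite.symm (Fin.cons 0 ⇑d : Fin (m + 1) → ℕ) := by
  ext i
  refine Fin.cases ?_ (fun k => ?_) i
  · rw [Finsupp.mapDomain_notin_range]
    · simp [coe_symm]
    · rintro ⟨k, hk⟩
      exact (Fin.succ_ne_zero k) hk
  · rw [Finsupp.mapDomain_apply (Fin.succ_injective m)]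
    simp [coe_symm]

lemma restrictScalars_comap_eq {m : ℕ} {I : Ideal (MvPolynomial (Fin (m + 1)) K)}
    (hI : IsMonomialIdeal K (m + 1) I) :
    Submodule.restrictScalars K (Ideal.comap (MvPolynomial.rename (Fin.succ) :
        MvPolynomial (Fin m) K →ₐ[K] MvPolynomial (Fin (m + 1)) K) I)
      = supp K m {g' : Fin m → ℕ | mono K (m + 1) (Fin.cons 0 g') ∈ I} := by
  ext f
  rw [Submodule.restrictScalars_mem, Ideal.mem_comap]
  have : (MvPolynomial.rename (Fin.succ) : MvPolynomial (Fin m) K →ₐ[K]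
      MvPolynomial (Fin (m + 1)) K) f ∈ I
      ↔ (MvPolynomial.rename (Fin.succ : Fin m → Fin (m+1)) f) ∈ Submodule.restrictScalars K I := Iff.rfl
  rw [this, restrictScalars_eq_supp hI]
  rw [mem_supp, mem_supp]
  constructor
  · intro h d hd
    have hmem : Finsupp.mapDomain Fin.succ d ∈ (MvPolynomial.rename
        (Fin.succ : Fin m → Fin (m+1)) f).support := by
      rw [MvPolynomial.support_rename_of_injective (Fin.succ_injective m)]
      exact Finset.mem_image_of_mem _ hd
    have := h _ hmem
    rw [mapDomain_succ_eq, coe_symm] at this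
    have hc : mono K (m+1) (Fin.cons 0 ⇑d) ∈ I := this
    exact hc
  · intro h D hD
    rw [MvPolynomial.support_rename_of_injective (Fin.succ_injective m)] at hD
    obtain ⟨d, hd, rfl⟩ := Finset.mem_image.mp hD
    rw [mapDomain_succ_eq, coe_symm]
    exact h d hd

lemma mem_E_lift_iff {m : ℕ} (a' : Fin m → ℕ) (Z' : Finset (Fin m)) (g : Fin (m + 1) → ℕ) :
    g ∈ E (Fin.cons 0 a') (insert 0 (Z'.map ⟨Fin.succ, Fin.succ_injective m⟩))
      ↔ (g ∘ Fin.succ) ∈ E a' Z' := by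
  constructor
  · rintro ⟨e, he, rfl⟩
    refine ⟨e ∘ Fin.succ, fun k hk => he k.succ ?_, funext fun k => by simp [Fin.cons_succ]⟩
    simp only [Finset.mem_insert, Finset.mem_map, Function.Embedding.coeFn_mk, not_or]
    exact ⟨Fin.succ_ne_zero k, by
      rintro ⟨k', hk', hkk⟩
      exact hk ((Fin.succ_injective m hkk) ▸ hk')⟩
  · rintro ⟨e', he', heq⟩
    refine ⟨Fin.cons (g 0) e', fun j hj => ?_, funext fun j => ?_⟩
    · refine Fin.cases ?_ (fun k hk => ?_) j hj
      · intro h0; exact absurd (Finset.mem_insert_self _ _) h0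
      · rw [Fin.cons_succ]
        refine he' k fun hmem => hk ?_
        exact Finset.mem_insert_of_mem (Finset.mem_map_of_mem _ hmem)
    · refine Fin.cases ?_ (fun k => ?_) j
      · simp
      · have := congrFun heq k
        simp only [Function.comp_apply] at this
        simp [Fin.cons_succ, this]

lemma partDec_lift {m : ℕ} {S : Set (Fin (m + 1) → ℕ)} {S' : Set (Fin m → ℕ)}
    (hS : ∀ g : Fin (m + 1) → ℕ, g ∈ S ↔ g ∘ Fin.succ ∈ S')
    {t : ℕ} {a' : Fin t → Fin m → ℕ} {Z' : Fin t → Finset (Fin m)} (h : PartDec S' t a' Z') :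
    PartDec S t (fun i => Fin.cons 0 (a' i))
      (fun i => insert 0 ((Z' i).map ⟨Fin.succ, Fin.succ_injective m⟩)) := by
  refine ⟨?_, ?_, ?_⟩
  · intro g
    rcases h.1 (g ∘ Fin.succ) with hg | ⟨i, hi⟩
    · exact Or.inl ((hS g).mpr hg)
    · exact Or.inr ⟨i, (mem_E_lift_iff _ _ g).mpr hi⟩
  · intro i g hgS hgE
    exact h.2.1 i (g ∘ Fin.succ) ((hS g).mp hgS) ((mem_E_lift_iff _ _ g).mp hgE)
  · intro i j hij g hgi hgj
    exact h.2.2 i j hij (g ∘ Fin.succ) ((mem_E_lift_iff _ _ g).mp hgi)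
      ((mem_E_lift_iff _ _ g).mp hgj)

lemma mem_E_res_iff {m : ℕ} (a : Fin (m + 1) → ℕ) (Z : Finset (Fin (m + 1)))
    (ha : a 0 = 0) (g' : Fin m → ℕ) :
    Fin.cons 0 g' ∈ E a Z
      ↔ g' ∈ E (a ∘ Fin.succ) (Finset.univ.filter (fun j : Fin m => j.succ ∈ Z)) := by
  constructor
  · rintro ⟨e, he, heq⟩
    refine ⟨e ∘ Fin.succ, fun k hk => he k.succ ?_, funext fun k => ?_⟩
    · intro hmem
      exact hk (Finset.mem_filter.mpr ⟨Finset.mem_univ k, hmem⟩)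
    · have := congrFun heq k.succ
      simpa [Fin.cons_succ] using this
  · rintro ⟨e', he', heq⟩
    refine ⟨Fin.cons 0 e', fun j hj => ?_, funext fun j => ?_⟩
    · refine Fin.cases ?_ (fun k hk => ?_) j hj
      · intro _; simp
      · rw [Fin.cons_succ]
        refine he' k fun hmem => hk (by simpa using Finset.mem_filter.mp hmem |>.2)
    · refine Fin.cases ?_ (fun k => ?_) j
      · simp [ha]
      · have := congrFun heq k
        simp [Fin.cons_succ, this]

lemma partDec_restrict {m : ℕ} {S : Set (Fin (m + 1) → ℕ)} {S' : Set (Fin m → ℕ)}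
    (hS : ∀ g : Fin (m + 1) → ℕ, g ∈ S ↔ g ∘ Fin.succ ∈ S')
    {t : ℕ} {a : Fin t → Fin (m + 1) → ℕ} {Z : Fin t → Finset (Fin (m + 1))}
    (h : PartDec S t a Z) (d : ℕ) (hd : ∀ i, d ≤ (Z i).card) :
    ∃ (t' : ℕ) (a' : Fin t' → Fin m → ℕ) (Z' : Fin t' → Finset (Fin m)),
      PartDec S' t' a' Z' ∧ ∀ k, d - 1 ≤ (Z' k).card := by
  classical
  set T : Finset (Fin t) := Finset.univ.filter (fun i => a i 0 = 0) with hT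
  set enum := T.orderIsoOfFin rfl with henum
  refine ⟨T.card, fun k => a (enum k : Fin t) ∘ Fin.succ,
    fun k => Finset.univ.filter (fun j : Fin m => j.succ ∈ Z (enum k : Fin t)), ?_, ?_⟩
  · have hmemT : ∀ k, a (enum k : Fin t) 0 = 0 := fun k =>
      (Finset.mem_filter.mp (enum k).2).2
    refine ⟨?_, ?_, ?_⟩
    · intro g'
      rcases h.1 (Fin.cons 0 g') with hg | ⟨i, hi⟩
      · exact Or.inl (by
          have := (hS _).mp hg
          simpa [Function.comp_def, Fin.cons_succ] using this)
      · have hai : a i 0 = 0 := by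
          obtain ⟨e, he, heq⟩ := hi
          have := congrFun heq 0
          simp only [Fin.cons_zero, Pi.add_apply] at this
          omega
        have hiT : i ∈ T := Finset.mem_filter.mpr ⟨Finset.mem_univ i, hai⟩
        refine Or.inr ⟨enum.symm ⟨i, hiT⟩, ?_⟩
        simp only [OrderIso.apply_symm_apply]
        exact (mem_E_res_iff _ _ hai g').mp hi
    · intro k g' hgS hgE
      have hcons : Fin.cons 0 g' ∈ S := by
        rw [hS]
        simpa [Function.comp_def, Fin.cons_succ] using hgS
      exact h.2.1 (enum k : Fin t) _ hcons ((mem_E_res_iff _ _ (hmemT k) g').mpr hgE)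
    · intro k k2 hkk g' hg1 hg2
      have hne : (enum k : Fin t) ≠ (enum k2 : Fin t) := by
        intro heq2
        exact hkk (enum.injective (Subtype.ext heq2))
      exact h.2.2 _ _ hne (Fin.cons 0 g')
        ((mem_E_res_iff _ _ (hmemT k) g').mpr hg1)
        ((mem_E_res_iff _ _ (hmemT k2) g').mpr hg2)
  · intro k
    set i := (enum k : Fin t) with hi
    show d - 1 ≤ (Finset.univ.filter (fun j : Fin m => j.succ ∈ Z i)).card
    have hsub : Z i ⊆ insert 0 ((Finset.univ.filter (fun j : Fin m => j.succ ∈ Z i)).map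
        ⟨Fin.succ, Fin.succ_injective m⟩) := by
      intro j hj
      refine Fin.cases ?_ (fun k' hk' => ?_) j hj
      · intro _; exact Finset.mem_insert_self _ _
      · exact Finset.mem_insert_of_mem (Finset.mem_map_of_mem _
          (Finset.mem_filter.mpr ⟨Finset.mem_univ _, hk'⟩))
    have hcard := Finset.card_le_card hsub
    have h1 := Finset.card_insert_le (0 : Fin (m+1))
      ((Finset.univ.filter (fun j : Fin m => j.succ ∈ Z i)).map ⟨Fin.succ, Fin.succ_injective m⟩)
    rw [Finset.card_map] at h1
    have := hd i
    omega

lemma exists_min_below {m : ℕ} {S' : Set (Fin m → ℕ)} :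
    ∀ (N : ℕ) (g : Fin m → ℕ), (∑ j, g j) ≤ N → g ∈ S' →
      ∃ b, (b ∈ S' ∧ ∀ c ∈ S', (∀ j, c j ≤ b j) → c = b) ∧ ∀ j, b j ≤ g j := by
  intro N
  induction N with
  | zero =>
    intro g hg hmem
    refine ⟨g, ⟨hmem, fun c hc hcle => funext fun j => ?_⟩, fun j => le_refl _⟩
    have h1 : g j ≤ ∑ j', g j' := Finset.single_le_sum (fun j' _ => Nat.zero_le _) (Finset.mem_univ j)
    have h2 := hcle j
    omega
  | succ N ih =>
    intro g hg hmem
    by_cases hmin : ∀ c ∈ S', (∀ j, c j ≤ g j) → c = g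
    · exact ⟨g, ⟨hmem, hmin⟩, fun j => le_refl _⟩
    · push_neg at hmin
      obtain ⟨c, hc, hcle, hcne⟩ := hmin
      have hlt : (∑ j, c j) < ∑ j, g j := by
        have hne : ∃ j, c j < g j := by
          by_contra hcon
          push_neg at hcon
          exact hcne (funext fun j => le_antisymm (hcle j) (hcon j))
        obtain ⟨j0, hj0⟩ := hne
        exact Finset.sum_lt_sum (fun j _ => hcle j) ⟨j0, Finset.mem_univ j0, hj0⟩
      obtain ⟨b, hb, hble⟩ := ih c (by omega) hc
      exact ⟨b, hb, fun j => le_trans (hble j) (hcle j)⟩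

lemma exists_partDec {m : ℕ} {S' : Set (Fin m → ℕ)}
    (hup : ∀ g h : Fin m → ℕ, g ∈ S' → (∀ j, g j ≤ h j) → h ∈ S') :
    ∃ (t : ℕ) (a : Fin t → Fin m → ℕ) (Z : Fin t → Finset (Fin m)), PartDec S' t a Z := by
  classical
  set Min : Set (Fin m → ℕ) := {b | b ∈ S' ∧ ∀ c ∈ S', (∀ j, c j ≤ b j) → c = b} with hMin
  have hanti : IsAntichain (· ≤ ·) Min := fun b hb c hc hbc hle =>
    hbc (hc.2 b hb.1 fun j => hle j)
  have hfin : Min.Finite := hanti.finite_of_partiallyWellOrderedOn (Set.isPWO_of_wellQuasiOrderedLE Min)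
  set N : ℕ := hfin.toFinset.sup (fun b => Finset.univ.sup b) with hN
  have hbN : ∀ b ∈ Min, ∀ j, b j ≤ N := fun b hb j =>
    le_trans (Finset.le_sup (f := b) (Finset.mem_univ j))
      (Finset.le_sup (hfin.mem_toFinset.mpr hb))
  have hbelow : ∀ g ∈ S', ∃ b ∈ Min, ∀ j, b j ≤ g j := fun g hg =>
    exists_min_below (∑ j, g j) g (le_refl _) hg
  set cap : (Fin m → ℕ) → (Fin m → ℕ) := fun g j => min (g j) N with hcap
  have hcapS : ∀ g, cap g ∈ S' ↔ g ∈ S' := by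
    intro g
    constructor
    · intro h
      exact hup (cap g) g h fun j => min_le_left _ _
    · intro hg
      obtain ⟨b, hb, hble⟩ := hbelow g hg
      exact hup b (cap g) hb.1 fun j => le_min (hble j) (hbN b hb j)
  set B : Finset (Fin m → ℕ) :=
    ((Finset.univ : Finset (Fin m → Fin (N + 1))).image
      (fun c j => (c j : ℕ))).filter (fun b => b ∉ S') with hB
  have hBle : ∀ b ∈ B, ∀ j, b j ≤ N := by
    intro b hb j
    obtain ⟨c, _, rfl⟩ := Finset.mem_image.mp (Finset.mem_filter.mp hb).1
    exact Fin.is_le _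
  have hBnot : ∀ b ∈ B, b ∉ S' := fun b hb => (Finset.mem_filter.mp hb).2
  have hcapB : ∀ g, g ∉ S' → cap g ∈ B := by
    intro g hg
    refine Finset.mem_filter.mpr ⟨Finset.mem_image.mpr
      ⟨fun j => (⟨min (g j) N, by omega⟩ : Fin (N + 1)), Finset.mem_univ _, rfl⟩,
      fun h => hg ((hcapS g).mp h)⟩
  have key : ∀ b : Fin m → ℕ, (∀ j, b j ≤ N) → ∀ g,
      (g ∈ E b (Finset.univ.filter (fun j => b j = N)) ↔ cap g = b) := by
    intro b hble g
    constructor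
    · rintro ⟨e, he, rfl⟩
      funext j
      by_cases hbj : b j = N
      · have : (b + e) j = b j + e j := rfl
        simp only [hcap]
        show min ((b + e) j) N = b j
        rw [this]
        omega
      · have he0 : e j = 0 := he j (by simp [hbj])
        show min ((b + e) j) N = b j
        have : (b + e) j = b j + e j := rfl
        rw [this, he0]
        have := hble j
        omega
    · intro hcapg
      refine ⟨fun j => g j - b j, fun j hj => ?_, funext fun j => ?_⟩
      · have hbj : b j ≠ N := by simpa using hj
        have h1 : min (g j) N = b j := congrFun hcapg j
        have h2 := hble j
        show g j - b j = 0
        rw [Nat.min_def] at h1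
        split_ifs at h1 <;> omega
      · have h1 : min (g j) N = b j := congrFun hcapg j
        show g j = b j + (g j - b j)
        rw [Nat.min_def] at h1
        split_ifs at h1 <;> omega
  refine ⟨B.card, fun k => ((B.equivFin.symm k : {x // x ∈ B}) : Fin m → ℕ),
    fun k => Finset.univ.filter (fun j => ((B.equivFin.symm k : {x // x ∈ B}) : Fin m → ℕ) j = N),
    ?_, ?_, ?_⟩
  · intro g
    by_cases hg : g ∈ S'
    · exact Or.inl hg
    · refine Or.inr ⟨B.equivFin ⟨cap g, hcapB g hg⟩, ?_⟩
      simp only [Equiv.symm_apply_apply]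
      exact (key (cap g) (fun j => min_le_right _ _) g).mpr rfl
  · intro k g hgS hgE
    set b := ((B.equivFin.symm k : {x // x ∈ B}) : Fin m → ℕ) with hb
    have hcap1 : cap g = b := (key b (hBle b (B.equivFin.symm k).2) g).mp hgE
    have : cap g ∈ S' := (hcapS g).mpr hgS
    rw [hcap1] at this
    exact hBnot b (B.equivFin.symm k).2 this
  · intro k k2 hkk g hg1 hg2
    set b1 := ((B.equivFin.symm k : {x // x ∈ B}) : Fin m → ℕ) with hb1
    set b2 := ((B.equivFin.symm k2 : {x // x ∈ B}) : Fin m → ℕ) with hb2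
    have hcap1 : cap g = b1 := (key b1 (hBle b1 (B.equivFin.symm k).2) g).mp hg1
    have hcap2 : cap g = b2 := (key b2 (hBle b2 (B.equivFin.symm k2).2) g).mp hg2
    have : B.equivFin.symm k = B.equivFin.symm k2 :=
      Subtype.ext (hcap1.symm.trans hcap2)
    exact hkk (B.equivFin.symm.injective this)

end SAux

/-- If no minimal generator of the monomial ideal `I` is divisible by `x_1`,
then `sdepth(S/I) = sdepth(S'/I') + 1` where `S' = K[x_2,…,x_n]` and `I' = I ∩ S'`. -/
theorem sdepth_eq_of_not_divisible
    (K : Type) [Field K] (m : ℕ) (hm : 1 ≤ m)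
    (I : Ideal (MvPolynomial (Fin (m + 1)) K))
    (hI : IsMonomialIdeal K (m + 1) I)
    (hx : ∀ a ∈ minGen K (m + 1) I, a 0 = 0) :
    sdepthQuot K (m + 1) I =
      sdepthQuot K m (Ideal.comap (MvPolynomial.rename (Fin.succ) :
        MvPolynomial (Fin m) K →ₐ[K] MvPolynomial (Fin (m + 1)) K) I) + 1 := by
  classical
  set S : Set (Fin (m + 1) → ℕ) := {g | mono K (m + 1) g ∈ I} with hSdef
  set S' : Set (Fin m → ℕ) := {g' | mono K (m + 1) (Fin.cons 0 g') ∈ I} with hS'def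
  have hIS : Submodule.restrictScalars K I = SAux.supp K (m + 1) S :=
    SAux.restrictScalars_eq_supp hI
  have hIS' : Submodule.restrictScalars K (Ideal.comap (MvPolynomial.rename (Fin.succ) :
      MvPolynomial (Fin m) K →ₐ[K] MvPolynomial (Fin (m + 1)) K) I) = SAux.supp K m S' :=
    SAux.restrictScalars_comap_eq hI
  have hS : ∀ g : Fin (m + 1) → ℕ, g ∈ S ↔ g ∘ Fin.succ ∈ S' := fun g =>
    SAux.strip_mem_iff hI hx g
  have hup : ∀ g h : Fin m → ℕ, g ∈ S' → (∀ j, g j ≤ h j) → h ∈ S' := by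
    intro g h hg hle
    obtain ⟨b, hbI, hble⟩ := (SAux.mono_mem_iff hI).mp hg
    refine (SAux.mono_mem_iff hI).mpr ⟨b, hbI, fun j => ?_⟩
    refine Fin.cases ?_ (fun k => ?_) j
    · simpa using hble 0
    · have h1 := hble k.succ
      simp only [Fin.cons_succ] at h1 ⊢
      exact le_trans h1 (hle k)
  set A := {d : ℕ | ∃ t a Z, SAux.PartDec S t a Z ∧ ∀ i, d ≤ (Z i).card} with hAdef
  set A' := {d : ℕ | ∃ t a Z, SAux.PartDec S' t a Z ∧ ∀ i, d ≤ (Z i).card} with hA'def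
  have hAeq : {d : ℕ | ∃ t a Z, IsStanleyDecOfQuot K (m + 1) I t a Z ∧ ∀ i, d ≤ (Z i).card}
      = A := Set.ext fun d => exists_congr fun t => exists_congr fun a =>
    exists_congr fun Z => and_congr_left fun _ => SAux.isStanleyDecOfQuot_iff hIS
  have hAeq' : {d : ℕ | ∃ t a Z, IsStanleyDecOfQuot K m (Ideal.comap
        (MvPolynomial.rename (Fin.succ) :
          MvPolynomial (Fin m) K →ₐ[K] MvPolynomial (Fin (m + 1)) K) I) t a Z
      ∧ ∀ i, d ≤ (Z i).card} = A' := Set.ext fun d => exists_congr fun t =>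
    exists_congr fun a => exists_congr fun Z => and_congr_left fun _ =>
      SAux.isStanleyDecOfQuot_iff hIS'
  have f1 : ∀ d' ∈ A', d' + 1 ∈ A := by
    rintro d' ⟨t, a', Z', hpd, hcard⟩
    refine ⟨t, _, _, SAux.partDec_lift hS hpd, fun i => ?_⟩
    rw [Finset.card_insert_of_notMem (by simp [Fin.succ_ne_zero]), Finset.card_map]
    exact Nat.succ_le_succ (hcard i)
  have f2 : ∀ d ∈ A, d - 1 ∈ A' := by
    rintro d ⟨t, a, Z, hpd, hcard⟩
    obtain ⟨t', a', Z', hpd', hcard'⟩ := SAux.partDec_restrict hS hpd d hcard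
    exact ⟨t', a', Z', hpd', hcard'⟩
  have f3 : (0 : ℕ) ∈ A' := by
    obtain ⟨t, a, Z, hpd⟩ := SAux.exists_partDec hup
    exact ⟨t, a, Z, hpd, fun i => Nat.zero_le _⟩
  rw [sdepthQuot, sdepthQuot, hAeq, hAeq']
  apply le_antisymm
  · refine sSup_le ?_
    rintro x ⟨d, hd, rfl⟩
    have hd' := f2 d hd
    have hle : ((d : ℕ) : ℕ∞) ≤ ((d - 1 : ℕ) : ℕ∞) + 1 := by
      calc ((d : ℕ) : ℕ∞) ≤ (((d - 1) + 1 : ℕ) : ℕ∞) := Nat.cast_le.mpr (by omega)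
        _ = ((d - 1 : ℕ) : ℕ∞) + 1 := by push_cast; ring
    exact hle.trans (add_le_add_left (le_sSup (Set.mem_image_of_mem ((↑) : ℕ → ℕ∞) hd')) 1)
  · have hy1 : (1 : ℕ∞) ≤ sSup ((↑) '' A : Set ℕ∞) := by
      have h1' : (1 : ℕ) ∈ A := f1 0 f3
      have h1 : ((1 : ℕ) : ℕ∞) ≤ sSup ((↑) '' A : Set ℕ∞) :=
        le_sSup (Set.mem_image_of_mem ((↑) : ℕ → ℕ∞) h1')
      exact_mod_cast h1
    have h2 : sSup ((↑) '' A' : Set ℕ∞) ≤ sSup ((↑) '' A : Set ℕ∞) - 1 := by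
      refine sSup_le ?_
      rintro x ⟨d', hd', rfl⟩
      refine AddLECancellable.le_tsub_of_add_le_right (ENat.addLECancellable_of_ne_top (by simp)) ?_
      have hcast : ((d' : ℕ) : ℕ∞) + 1 = ((d' + 1 : ℕ) : ℕ∞) := by push_cast; ring
      rw [hcast]
      exact le_sSup (Set.mem_image_of_mem ((↑) : ℕ → ℕ∞) (f1 d' hd'))
    calc sSup ((↑) '' A' : Set ℕ∞) + 1 ≤ (sSup ((↑) '' A : Set ℕ∞) - 1) + 1 :=
          add_le_add_left h2 1
      _ = sSup ((↑) '' A : Set ℕ∞) := tsub_add_cancel_of_le hy1
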